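/- For m, b₀, Ω > 0, the function f(t) = ((2b₀m)/(2b₀m+Ω))^m · (1/(2b₀)) · e^{−t/(2b₀)} · Σ_{n=0}^∞ ((m)_n/(n!)²) · (Ω t/(2b₀(2b₀m+Ω)))^n is a probability density on [0, ∞), i.e., f(t) ≥ 0 and ∫₀^∞ f(t) dt = 1. -/

import Mathlib

open Real Set

open MeasureTheory Filter

lemma gamma_poch (m : ℝ) (hm : 0 < m) (n : ℕ) :
    Real.Gamma (m + n) = (ascPochhammer ℝ n).eval m * Real.Gamma m := by
  induction n with
  | zero => simp
  | succ k ih =>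
    have h1 : m + (k + 1 : ℕ) = (m + k) + 1 := by push_cast; ring
    rw [h1, Real.Gamma_add_one (by positivity), ih, ascPochhammer_succ_eval]
    ring

lemma poch_summable (m : ℝ) (hm : 0 < m) {x : ℝ} (hx0 : 0 < x) (hx1 : x < 1) :
    Summable (fun n : ℕ => (ascPochhammer ℝ n).eval m / n.factorial * x ^ n) := by
  apply summable_of_ratio_test_tendsto_lt_one hx1
  · filter_upwards with n
    have := ascPochhammer_pos n m hm
    positivity
  · have key : ∀ n : ℕ, ‖(ascPochhammer ℝ (n+1)).eval m / (n+1).factorial * x ^ (n+1)‖ /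
        ‖(ascPochhammer ℝ n).eval m / n.factorial * x ^ n‖ = (m + n) / (n + 1) * x := by
      intro n
      have hp := ascPochhammer_pos n m hm
      have hf : (0:ℝ) < n.factorial := by positivity
      rw [ascPochhammer_succ_eval, Nat.factorial_succ]
      push_cast
      rw [Real.norm_of_nonneg (by positivity), Real.norm_of_nonneg (by positivity)]
      field_simp
      ring
    simp_rw [key]
    have h2 : Tendsto (fun n : ℕ => (m + n) / (n + 1)) atTop (nhds 1) := by
      have h3 : ∀ n : ℕ, (m + n) / (n + 1) = 1 + (m - 1) / ((n:ℝ) + 1) := by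
        intro n
        have : (0:ℝ) < (n:ℝ) + 1 := by positivity
        field_simp
        ring
      simp_rw [h3]
      have h4 : Tendsto (fun n : ℕ => (m - 1) / ((n:ℝ) + 1)) atTop (nhds 0) := by
        have h4' := (tendsto_const_div_atTop_nhds_zero_nat (m - 1)).comp (tendsto_add_atTop_nat 1)
        refine h4'.congr fun n => ?_
        simp
      simpa using tendsto_const_nhds.add h4
    simpa using h2.mul_const x

lemma binom_tsum (m : ℝ) (hm : 0 < m) {x : ℝ} (hx0 : 0 < x) (hx1 : x < 1) :
    ∑' n : ℕ, (ascPochhammer ℝ n).eval m / n.factorial * x ^ n = (1 - x) ^ (-m) := by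
  set F : ℕ → ℝ → ℝ := fun n t => t ^ (m + n - 1) * Real.exp (-t) * (x ^ n / n.factorial)
  have hGpos : 0 < Real.Gamma m := Real.Gamma_pos_of_pos hm
  have hint : ∀ n : ℕ, IntegrableOn (F n) (Ioi 0) := by
    intro n
    have h := integrableOn_rpow_mul_exp_neg_mul_rpow (p := 1) (s := m + n - 1) (b := 1)
      (by have : (0:ℝ) ≤ n := n.cast_nonneg; linarith) one_pos one_pos
    have h' : IntegrableOn (fun t : ℝ => t ^ (m + n - 1) * Real.exp (-t)) (Ioi 0) := by
      refine h.congr_fun (fun t ht => ?_) measurableSet_Ioi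
      beta_reduce; rw [Real.rpow_one]; ring_nf
    exact h'.mul_const _
  have hval : ∀ n : ℕ, ∫ t in Ioi 0, F n t = Real.Gamma (m + n) * (x ^ n / n.factorial) := by
    intro n
    rw [MeasureTheory.integral_mul_const]
    congr 1
    have := integral_rpow_mul_exp_neg_mul_Ioi (a := m + n) (r := 1) (by positivity) one_pos
    simp only [one_mul, Real.one_rpow, one_div, inv_one] at this
    rw [← this]
  have hnormval : ∀ n : ℕ, (∫ t in Ioi 0, ‖F n t‖) = Real.Gamma (m + n) * (x ^ n / n.factorial) := by
    intro n
    rw [← hval n]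
    refine setIntegral_congr_fun measurableSet_Ioi (fun t ht => ?_)
    have ht' : (0:ℝ) < t := ht
    refine Real.norm_of_nonneg ?_
    simp only [F]
    positivity
  have hsum : Summable (fun n : ℕ => ∫ t in Ioi 0, ‖F n t‖) := by
    simp_rw [hnormval]
    have : ∀ n : ℕ, Real.Gamma (m + n) * (x ^ n / n.factorial)
        = Real.Gamma m * ((ascPochhammer ℝ n).eval m / n.factorial * x ^ n) := by
      intro n; rw [gamma_poch m hm n]; ring
    simp_rw [this]
    exact (poch_summable m hm hx0 hx1).mul_left _
  have swap := MeasureTheory.integral_tsum_of_summable_integral_norm hint hsum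
  have hpt : ∀ t ∈ Ioi (0:ℝ), (∑' n : ℕ, F n t) = t ^ (m - 1) * Real.exp (-((1 - x) * t)) := by
    intro t ht
    have ht' : (0:ℝ) < t := ht
    have h1 : ∀ n : ℕ, F n t = t ^ (m - 1) * Real.exp (-t) * ((x * t) ^ n / n.factorial) := by
      intro n
      have : t ^ (m + n - 1) = t ^ (m - 1) * t ^ n := by
        rw [← Real.rpow_natCast t n, ← Real.rpow_add ht']
        ring_nf
      simp only [F, this, mul_pow]
      ring
    simp_rw [h1]
    rw [tsum_mul_left]
    have hexp : (∑' n : ℕ, (x * t) ^ n / n.factorial) = Real.exp (x * t) := by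
      rw [Real.exp_eq_exp_ℝ, NormedSpace.exp_eq_tsum_div]
    rw [hexp, mul_assoc, ← Real.exp_add]
    congr 1
    ring
  have hfin : (∫ t in Ioi 0, (∑' n : ℕ, F n t))
      = (1 / (1 - x)) ^ m * Real.Gamma m := by
    rw [setIntegral_congr_fun measurableSet_Ioi hpt]
    exact integral_rpow_mul_exp_neg_mul_Ioi hm (by linarith)
  have key : (∑' n : ℕ, Real.Gamma (m + n) * (x ^ n / n.factorial))
      = (1 / (1 - x)) ^ m * Real.Gamma m := by
    rw [← hfin, ← swap]; exact tsum_congr fun n => (hval n).symm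
  have key2 : Real.Gamma m * (∑' n : ℕ, (ascPochhammer ℝ n).eval m / n.factorial * x ^ n)
      = (1 / (1 - x)) ^ m * Real.Gamma m := by
    rw [← key, ← tsum_mul_left]
    refine tsum_congr (fun n => ?_)
    rw [gamma_poch m hm n]; ring
  have hx' : (0:ℝ) < 1 - x := by linarith
  have : (∑' n : ℕ, (ascPochhammer ℝ n).eval m / n.factorial * x ^ n)
      = (1 / (1 - x)) ^ m :=
    mul_left_cancel₀ hGpos.ne' (key2.trans (mul_comm _ _))
  rw [this, Real.rpow_neg hx'.le, one_div, Real.inv_rpow hx'.le]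

lemma aux_integral (m b0 Om : ℝ) (hm : 0 < m) (hb0 : 0 < b0) (hOm : 0 < Om) :
    (∫ t in Ioi (0:ℝ), Real.exp (-t / (2 * b0))
        * ∑' n : ℕ, ((ascPochhammer ℝ n).eval m / ((Nat.factorial n : ℝ)) ^ 2)
            * (Om * t / (2 * b0 * (2 * b0 * m + Om))) ^ n)
    = 2 * b0 * (2 * b0 * m / (2 * b0 * m + Om)) ^ (-m) := by
  have hK : (0:ℝ) < 2 * b0 * m + Om := by positivity
  have hx0 : 0 < Om / (2 * b0 * m + Om) := by positivity
  have hx1 : Om / (2 * b0 * m + Om) < 1 := by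
    rw [div_lt_one hK]
    nlinarith
  set F : ℕ → ℝ → ℝ := fun n t => Real.exp (-t / (2 * b0))
      * (((ascPochhammer ℝ n).eval m / ((Nat.factorial n : ℝ)) ^ 2)
          * (Om * t / (2 * b0 * (2 * b0 * m + Om))) ^ n) with hF
  have hFeq : ∀ n : ℕ, ∀ t : ℝ, F n t
      = ((ascPochhammer ℝ n).eval m / ((Nat.factorial n : ℝ)) ^ 2
          * (Om / (2 * b0 * (2 * b0 * m + Om))) ^ n) * (t ^ n * Real.exp (-t / (2 * b0))) := by
    intro n t
    simp only [hF]
    rw [show Om * t / (2 * b0 * (2 * b0 * m + Om))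
        = Om / (2 * b0 * (2 * b0 * m + Om)) * t from by ring, mul_pow]
    ring
  have hint : ∀ n : ℕ, IntegrableOn (F n) (Ioi 0) := by
    intro n
    have base := integrableOn_rpow_mul_exp_neg_mul_rpow (s := (n:ℝ)) (p := 1) (b := 1/(2*b0))
      (by have : (0:ℝ) ≤ n := n.cast_nonneg; linarith) one_pos (by positivity)
    have base' : IntegrableOn (fun t : ℝ => t ^ n * Real.exp (-t / (2 * b0))) (Ioi 0) := by
      refine base.congr_fun (fun t ht => ?_) measurableSet_Ioi
      beta_reduce; rw [Real.rpow_one, Real.rpow_natCast, show -(1/(2*b0)) * t = -t/(2*b0) from by ring]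
    have h2 : IntegrableOn (fun t : ℝ => ((ascPochhammer ℝ n).eval m / ((Nat.factorial n : ℝ)) ^ 2
        * (Om / (2 * b0 * (2 * b0 * m + Om))) ^ n) * (t ^ n * Real.exp (-t / (2 * b0))))
        (Ioi 0) := base'.const_mul _
    exact h2.congr_fun (fun t ht => (hFeq n t).symm) measurableSet_Ioi
  have hJ : ∀ n : ℕ, (∫ t in Ioi (0:ℝ), t ^ n * Real.exp (-t / (2 * b0)))
      = (2 * b0) ^ (n + 1) * (Nat.factorial n : ℝ) := by
    intro n
    calc (∫ t in Ioi (0:ℝ), t ^ n * Real.exp (-t / (2 * b0)))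
        = ∫ t in Ioi (0:ℝ), t ^ (((n:ℝ) + 1) - 1) * Real.exp (-(1/(2*b0) * t)) := by
          refine setIntegral_congr_fun measurableSet_Ioi (fun t ht => ?_)
          rw [add_sub_cancel_right, Real.rpow_natCast,
            show -(1/(2*b0) * t) = -t/(2*b0) from by ring]
      _ = (1/(1/(2*b0))) ^ ((n:ℝ) + 1) * Real.Gamma ((n:ℝ) + 1) :=
          integral_rpow_mul_exp_neg_mul_Ioi (by positivity) (by positivity)
      _ = (2 * b0) ^ (n + 1) * (Nat.factorial n : ℝ) := by
          rw [one_div_one_div, Real.Gamma_nat_eq_factorial,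
            show ((n:ℝ) + 1) = ((n + 1 : ℕ) : ℝ) from by push_cast; ring, Real.rpow_natCast]
  have hval : ∀ n : ℕ, (∫ t in Ioi (0:ℝ), F n t)
      = 2 * b0 * ((ascPochhammer ℝ n).eval m / (Nat.factorial n : ℝ)
          * (Om / (2 * b0 * m + Om)) ^ n) := by
    intro n
    rw [setIntegral_congr_fun measurableSet_Ioi (fun t ht => hFeq n t),
      MeasureTheory.integral_const_mul, hJ n]
    have hfac : ((Nat.factorial n : ℝ)) ≠ 0 := by positivity
    rw [div_pow, div_pow, pow_succ, mul_pow]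
    field_simp
    ring
  have hnorm : ∀ n : ℕ, (∫ t in Ioi (0:ℝ), ‖F n t‖) = ∫ t in Ioi (0:ℝ), F n t := by
    intro n
    refine setIntegral_congr_fun measurableSet_Ioi (fun t ht => ?_)
    have ht' : (0:ℝ) < t := ht
    refine Real.norm_of_nonneg ?_
    simp only [hF]
    refine mul_nonneg (Real.exp_nonneg _) (mul_nonneg
      (div_nonneg (ascPochhammer_pos n m hm).le (by positivity))
      (pow_nonneg (by positivity) n))
  have hsum : Summable (fun n : ℕ => ∫ t in Ioi (0:ℝ), ‖F n t‖) := by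
    simp_rw [hnorm, hval]
    exact ((poch_summable m hm hx0 hx1).mul_left _)
  calc (∫ t in Ioi (0:ℝ), Real.exp (-t / (2 * b0))
        * ∑' n : ℕ, ((ascPochhammer ℝ n).eval m / ((Nat.factorial n : ℝ)) ^ 2)
            * (Om * t / (2 * b0 * (2 * b0 * m + Om))) ^ n)
      = ∫ t in Ioi (0:ℝ), ∑' n : ℕ, F n t := by
        refine setIntegral_congr_fun measurableSet_Ioi (fun t ht => ?_)
        exact (tsum_mul_left).symm
    _ = ∑' n : ℕ, ∫ t in Ioi (0:ℝ), F n t :=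
        (MeasureTheory.integral_tsum_of_summable_integral_norm hint hsum).symm
    _ = ∑' n : ℕ, 2 * b0 * ((ascPochhammer ℝ n).eval m / (Nat.factorial n : ℝ)
          * (Om / (2 * b0 * m + Om)) ^ n) := tsum_congr hval
    _ = 2 * b0 * ∑' n : ℕ, ((ascPochhammer ℝ n).eval m / (Nat.factorial n : ℝ)
          * (Om / (2 * b0 * m + Om)) ^ n) := tsum_mul_left
    _ = 2 * b0 * (2 * b0 * m / (2 * b0 * m + Om)) ^ (-m) := by
        rw [binom_tsum m hm hx0 hx1,
          show 1 - Om / (2 * b0 * m + Om) = 2 * b0 * m / (2 * b0 * m + Om) from by field_simp; ring]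

/-- The shadowed-Rician power density
`f(t) = ((2b₀m)/(2b₀m+Ω))^m (1/(2b₀)) e^{−t/(2b₀)} Σₙ ((m)ₙ/(n!)²)(Ωt/(2b₀(2b₀m+Ω)))ⁿ`
is a probability density on `[0, ∞)`. -/
theorem stmt9 (m b0 Om : ℝ) (hm : 0 < m) (hb0 : 0 < b0) (hOm : 0 < Om) :
    (∀ t : ℝ, 0 ≤ t →
      0 ≤ (2 * b0 * m / (2 * b0 * m + Om)) ^ m * (1 / (2 * b0))
            * Real.exp (-t / (2 * b0))
            * ∑' (n : ℕ),
                ((ascPochhammer ℝ n).eval m / ((Nat.factorial n : ℝ)) ^ 2)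
                  * (Om * t / (2 * b0 * (2 * b0 * m + Om))) ^ n) ∧
    (∫ t in Ioi (0:ℝ),
        (2 * b0 * m / (2 * b0 * m + Om)) ^ m * (1 / (2 * b0))
          * Real.exp (-t / (2 * b0))
          * ∑' (n : ℕ),
              ((ascPochhammer ℝ n).eval m / ((Nat.factorial n : ℝ)) ^ 2)
                * (Om * t / (2 * b0 * (2 * b0 * m + Om))) ^ n) = 1 := by
  have hK : (0:ℝ) < 2 * b0 * m + Om := by positivity
  constructor
  · intro t ht
    refine mul_nonneg (mul_nonneg (mul_nonneg (Real.rpow_nonneg (by positivity) m)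
      (by positivity)) (Real.exp_nonneg _)) (tsum_nonneg (fun n => mul_nonneg
      (div_nonneg (ascPochhammer_pos n m hm).le (by positivity))
      (pow_nonneg (by positivity) n)))
  · calc (∫ t in Ioi (0:ℝ),
        (2 * b0 * m / (2 * b0 * m + Om)) ^ m * (1 / (2 * b0))
          * Real.exp (-t / (2 * b0))
          * ∑' (n : ℕ),
              ((ascPochhammer ℝ n).eval m / ((Nat.factorial n : ℝ)) ^ 2)
                * (Om * t / (2 * b0 * (2 * b0 * m + Om))) ^ n)
        = (2 * b0 * m / (2 * b0 * m + Om)) ^ m * (1 / (2 * b0))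
          * ∫ t in Ioi (0:ℝ), Real.exp (-t / (2 * b0))
            * ∑' (n : ℕ), ((ascPochhammer ℝ n).eval m / ((Nat.factorial n : ℝ)) ^ 2)
                * (Om * t / (2 * b0 * (2 * b0 * m + Om))) ^ n := by
          rw [← MeasureTheory.integral_const_mul]
          exact setIntegral_congr_fun measurableSet_Ioi fun t ht => by ring
      _ = (2 * b0 * m / (2 * b0 * m + Om)) ^ m * (1 / (2 * b0))
          * (2 * b0 * (2 * b0 * m / (2 * b0 * m + Om)) ^ (-m)) := by
          rw [aux_integral m b0 Om hm hb0 hOm]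
      _ = (2 * b0 / (2 * b0)) * ((2 * b0 * m / (2 * b0 * m + Om)) ^ m
          * (2 * b0 * m / (2 * b0 * m + Om)) ^ (-m)) := by ring
      _ = 1 := by
          rw [div_self (by positivity), one_mul, ← Real.rpow_add (by positivity),
            add_neg_cancel, Real.rpow_zero]
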